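/- Let n ≥ p ≥ 1, α = √2/2, β = 1 − √2/2, let ε > 0, and let ζ : ℝ → ℝ be continuously differentiable with ζ(t) = 0 for all t ≥ 2ε. Fix indices 1 ≤ u ≤ n, 1 ≤ v ≤ p. Then the map from ℝ^{n×p} to ℝ^{n×p} defined by X ↦ ζ(‖XᵀX − I_p‖_F²) (E_{uv} − α X E_{uv}ᵀ X − β X Xᵀ E_{uv}) is globally Lipschitz continuous (with respect to the Frobenius norm). -/

import Mathlib

open Matrix

/-- Frobenius norm of a matrix. -/
noncomputable def frobNorm {n p : ℕ} (M : Matrix (Fin n) (Fin p) ℝ) : ℝ :=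
  Real.sqrt (∑ i : Fin n, ∑ j : Fin p, (M i j) ^ 2)

/-- The cutoff diffusion coefficient
`X ↦ ζ(‖XᵀX - I‖_F²) (E_{uv} - α X E_{uv}ᵀ X - β X Xᵀ E_{uv})`
with `α = √2/2`, `β = 1 - √2/2`. -/
noncomputable def cutoffField {n p : ℕ} (ζ : ℝ → ℝ) (u : Fin n) (v : Fin p)
    (X : Matrix (Fin n) (Fin p) ℝ) : Matrix (Fin n) (Fin p) ℝ :=
  ζ (∑ i : Fin p, ∑ j : Fin p, ((Xᵀ * X - (1 : Matrix (Fin p) (Fin p) ℝ)) i j) ^ 2) •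
    (Matrix.single u v (1 : ℝ)
      - (Real.sqrt 2 / 2) • (X * (Matrix.single u v (1 : ℝ))ᵀ * X)
      - (1 - Real.sqrt 2 / 2) • (X * Xᵀ * Matrix.single u v (1 : ℝ)))

section Aux
attribute [local instance] Matrix.normedAddCommGroup Matrix.normedSpace

variable {n p : ℕ}

private lemma coord_cd (a : Fin n) (b : Fin p) :
    ContDiff ℝ 1 fun X : Matrix (Fin n) (Fin p) ℝ => X a b := by
  have h1 : ContDiff ℝ 1 fun X : Matrix (Fin n) (Fin p) ℝ => X a :=
    contDiff_pi.mp contDiff_id a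
  exact contDiff_pi.mp h1 b

private lemma mulEntry_cd {q r s : ℕ}
    (A : Matrix (Fin n) (Fin p) ℝ → Matrix (Fin q) (Fin r) ℝ)
    (B : Matrix (Fin n) (Fin p) ℝ → Matrix (Fin r) (Fin s) ℝ)
    (hA : ∀ i j, ContDiff ℝ 1 fun X => A X i j)
    (hB : ∀ i j, ContDiff ℝ 1 fun X => B X i j)
    (i : Fin q) (j : Fin s) : ContDiff ℝ 1 fun X => (A X * B X) i j := by
  simp only [Matrix.mul_apply]
  exact ContDiff.sum fun k _ => (hA i k).mul (hB k j)

private lemma g_cd :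
    ContDiff ℝ 1 fun X : Matrix (Fin n) (Fin p) ℝ =>
      (∑ i : Fin p, ∑ j : Fin p, ((Xᵀ * X - (1 : Matrix (Fin p) (Fin p) ℝ)) i j) ^ 2) := by
  apply ContDiff.sum; intro i _; apply ContDiff.sum; intro j _
  simp only [Matrix.sub_apply]
  have h : ContDiff ℝ 1 fun X : Matrix (Fin n) (Fin p) ℝ => (Xᵀ * X) i j := by
    apply mulEntry_cd (fun X => Xᵀ) (fun X => X) _ (fun i j => coord_cd i j)
    intro a b
    simp only [Matrix.transpose_apply]
    exact coord_cd b a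
  exact (h.sub contDiff_const).pow 2

private lemma cutoffField_cd (ζ : ℝ → ℝ) (hζ : ContDiff ℝ 1 ζ) (u : Fin n) (v : Fin p) :
    ContDiff ℝ 1 (cutoffField ζ u v) := by
  refine contDiff_pi.2 fun i => contDiff_pi.2 fun j => ?_
  unfold cutoffField
  simp only [Matrix.smul_apply, Matrix.sub_apply, smul_eq_mul]
  apply ContDiff.mul (hζ.comp g_cd)
  have hE : ∀ (q r : ℕ) (M : Matrix (Fin q) (Fin r) ℝ) (a : Fin q) (b : Fin r),
      ContDiff ℝ 1 fun _ : Matrix (Fin n) (Fin p) ℝ => M a b := fun _ _ _ _ _ => contDiff_const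
  have hX : ∀ (a : Fin n) (b : Fin p),
      ContDiff ℝ 1 fun X : Matrix (Fin n) (Fin p) ℝ => X a b := coord_cd
  have hXt : ∀ (a : Fin p) (b : Fin n),
      ContDiff ℝ 1 fun X : Matrix (Fin n) (Fin p) ℝ => Xᵀ a b := by
    intro a b; simp only [Matrix.transpose_apply]; exact coord_cd b a
  have h1 : ContDiff ℝ 1 fun X : Matrix (Fin n) (Fin p) ℝ =>
      (X * (Matrix.single u v (1 : ℝ))ᵀ * X) i j :=
    mulEntry_cd _ _ (fun i j => mulEntry_cd _ _ hX (hE _ _ _) i j) hX i j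
  have h2 : ContDiff ℝ 1 fun X : Matrix (Fin n) (Fin p) ℝ =>
      (X * Xᵀ * Matrix.single u v (1 : ℝ)) i j :=
    mulEntry_cd _ _ (fun i j => mulEntry_cd _ _ hX hXt i j) (hE _ _ _) i j
  exact (contDiff_const.sub (contDiff_const.mul h1)).sub (contDiff_const.mul h2)

private lemma zero_of_big (ε : ℝ) (hε : 0 < ε) (ζ : ℝ → ℝ)
    (hζ0 : ∀ t : ℝ, 2 * ε ≤ t → ζ t = 0) (u : Fin n) (v : Fin p)
    (Y : Matrix (Fin n) (Fin p) ℝ)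
    (hY : Real.sqrt (Real.sqrt (2 * ε) + 1) < ‖Y‖) : cutoffField ζ u v Y = 0 := by
  set M1 : Matrix (Fin p) (Fin p) ℝ := Yᵀ * Y - (1 : Matrix (Fin p) (Fin p) ℝ) with hM1
  set g := ∑ i : Fin p, ∑ j : Fin p, (M1 i j) ^ 2 with hg
  have : 2 * ε ≤ g := by
    by_contra hlt
    push_neg at hlt
    apply absurd hY
    push_neg
    rw [Matrix.norm_le_iff (Real.sqrt_nonneg _)]
    intro i j
    have hd : (M1 j j) ^ 2 ≤ g := by
      rw [hg]
      calc (M1 j j) ^ 2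
          ≤ ∑ j' : Fin p, (M1 j j') ^ 2 :=
            Finset.single_le_sum (f := fun j' => (M1 j j') ^ 2)
              (fun k _ => sq_nonneg _) (Finset.mem_univ j)
        _ ≤ ∑ i' : Fin p, ∑ j' : Fin p, (M1 i' j') ^ 2 :=
            Finset.single_le_sum (f := fun i' => ∑ j' : Fin p, (M1 i' j') ^ 2)
              (fun k _ => Finset.sum_nonneg fun l _ => sq_nonneg _) (Finset.mem_univ j)
    have habs : |M1 j j| ≤ Real.sqrt (2 * ε) := by
      rw [← Real.sqrt_sq_eq_abs]
      exact Real.sqrt_le_sqrt (le_of_lt (lt_of_le_of_lt hd hlt))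
    have hdiag : (Yᵀ * Y) j j ≤ Real.sqrt (2 * ε) + 1 := by
      have h1 : (Yᵀ * Y) j j = M1 j j + 1 := by
        simp [hM1, Matrix.sub_apply, Matrix.one_apply_eq]
      rw [h1]
      have := (abs_le.mp habs).2
      linarith
    have hsq : (Y i j) ^ 2 ≤ (Yᵀ * Y) j j := by
      rw [Matrix.mul_apply]
      have : (Y i j) ^ 2 = Yᵀ j i * Y i j := by
        simp [Matrix.transpose_apply, sq]
      rw [this]
      exact Finset.single_le_sum
        (fun k _ => by simpa [Matrix.transpose_apply, sq] using sq_nonneg (Y k j))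
        (Finset.mem_univ i)
    have : ‖Y i j‖ = Real.sqrt ((Y i j) ^ 2) := by
      rw [Real.sqrt_sq_eq_abs, Real.norm_eq_abs]
    rw [this]
    exact Real.sqrt_le_sqrt (hsq.trans hdiag)
  unfold cutoffField
  rw [show (∑ i : Fin p, ∑ j : Fin p, ((Yᵀ * Y - (1 : Matrix (Fin p) (Fin p) ℝ)) i j) ^ 2) = g from rfl,
    hζ0 g this, zero_smul]

private lemma norm_le_frob (M : Matrix (Fin n) (Fin p) ℝ) : ‖M‖ ≤ frobNorm M := by
  unfold frobNorm
  rw [Matrix.norm_le_iff (Real.sqrt_nonneg _)]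
  intro i j
  rw [Real.norm_eq_abs, ← Real.sqrt_sq_eq_abs]
  apply Real.sqrt_le_sqrt
  calc (M i j) ^ 2
      ≤ ∑ j' : Fin p, (M i j') ^ 2 :=
        Finset.single_le_sum (f := fun j' => (M i j') ^ 2)
          (fun k _ => sq_nonneg _) (Finset.mem_univ j)
    _ ≤ ∑ i' : Fin n, ∑ j' : Fin p, (M i' j') ^ 2 :=
        Finset.single_le_sum (f := fun i' => ∑ j' : Fin p, (M i' j') ^ 2)
          (fun k _ => Finset.sum_nonneg fun l _ => sq_nonneg _) (Finset.mem_univ i)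

private lemma frob_le_norm (M : Matrix (Fin n) (Fin p) ℝ) :
    frobNorm M ≤ Real.sqrt (n * p) * ‖M‖ := by
  have h : frobNorm M ≤ Real.sqrt ((n * p : ℝ) * ‖M‖ ^ 2) := by
    unfold frobNorm
    apply Real.sqrt_le_sqrt
    calc ∑ i : Fin n, ∑ j : Fin p, (M i j) ^ 2
        ≤ ∑ _i : Fin n, ∑ _j : Fin p, ‖M‖ ^ 2 := by
          apply Finset.sum_le_sum; intro i _; apply Finset.sum_le_sum; intro j _
          rw [← sq_abs (M i j)]
          exact pow_le_pow_left₀ (abs_nonneg _)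
            (M.norm_entry_le_entrywise_sup_norm (i := i) (j := j)) 2
      _ = (n * p : ℝ) * ‖M‖ ^ 2 := by
          simp [Finset.sum_const]
          ring
  calc frobNorm M ≤ Real.sqrt ((n * p : ℝ) * ‖M‖ ^ 2) := h
    _ = Real.sqrt (n * p) * ‖M‖ := by
        rw [Real.sqrt_mul (by positivity), Real.sqrt_sq (norm_nonneg _)]

private lemma lipschitz_norm (ε : ℝ) (hε : 0 < ε) (ζ : ℝ → ℝ) (hζ : ContDiff ℝ 1 ζ)
    (hζ0 : ∀ t : ℝ, 2 * ε ≤ t → ζ t = 0) (u : Fin n) (v : Fin p) :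
    ∃ C : ℝ, 0 ≤ C ∧ ∀ X Y : Matrix (Fin n) (Fin p) ℝ,
      ‖cutoffField ζ u v X - cutoffField ζ u v Y‖ ≤ C * ‖X - Y‖ := by
  letI : NormedAddCommGroup (Matrix (Fin n) (Fin p) ℝ →L[ℝ] Matrix (Fin n) (Fin p) ℝ) :=
    ContinuousLinearMap.toNormedAddCommGroup
  set F := cutoffField ζ u v with hF
  set R := Real.sqrt (Real.sqrt (2 * ε) + 1) with hR
  have hFcd : ContDiff ℝ 1 F := cutoffField_cd ζ hζ u v
  have hcont : Continuous fun X : Matrix (Fin n) (Fin p) ℝ => ‖fderiv ℝ F X‖ :=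
    (hFcd.continuous_fderiv one_ne_zero).norm
  obtain ⟨x₀, _, hx₀⟩ :=
    (isCompact_closedBall (0 : Matrix (Fin n) (Fin p) ℝ) (R + 1)).exists_isMaxOn
      (Metric.nonempty_closedBall.mpr (by positivity)) hcont.continuousOn
  refine ⟨‖fderiv ℝ F x₀‖, norm_nonneg _, fun X Y => ?_⟩
  have hbound : ∀ Z : Matrix (Fin n) (Fin p) ℝ, ‖fderiv ℝ F Z‖ ≤ ‖fderiv ℝ F x₀‖ := by
    intro Z
    by_cases hZ : ‖Z‖ ≤ R + 1
    · exact hx₀ (by simpa [Metric.mem_closedBall, dist_zero_right] using hZ)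
    · push_neg at hZ
      have hopen : IsOpen {W : Matrix (Fin n) (Fin p) ℝ | R < ‖W‖} :=
        isOpen_lt continuous_const continuous_norm
      have hmem : Z ∈ {W : Matrix (Fin n) (Fin p) ℝ | R < ‖W‖} := by
        simp only [Set.mem_setOf_eq]; nlinarith [Real.sqrt_nonneg (Real.sqrt (2 * ε) + 1)]
      have hev : F =ᶠ[nhds Z] fun _ => 0 := by
        filter_upwards [hopen.mem_nhds hmem] with W hW
        exact zero_of_big ε hε ζ hζ0 u v W hW
      rw [hev.fderiv_eq, fderiv_const_apply]
      simp
  calc ‖F X - F Y‖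
      ≤ ‖fderiv ℝ F x₀‖ * ‖X - Y‖ :=
        Convex.norm_image_sub_le_of_norm_fderiv_le
          (fun x _ => (hFcd.differentiable one_ne_zero).differentiableAt)
          (fun x _ => hbound x) convex_univ (Set.mem_univ Y) (Set.mem_univ X)
    _ = ‖fderiv ℝ F x₀‖ * ‖X - Y‖ := rfl

end Aux

/-- if `ζ` is continuously differentiable and vanishes on `[2ε, ∞)`, then
the cutoff diffusion coefficient is globally Lipschitz with respect to the Frobenius
norm. -/
theorem cutoff_field_lipschitz (n p : ℕ) (hp : 1 ≤ p) (hpn : p ≤ n)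
    (ε : ℝ) (hε : 0 < ε) (ζ : ℝ → ℝ) (hζ : ContDiff ℝ 1 ζ)
    (hζ0 : ∀ t : ℝ, 2 * ε ≤ t → ζ t = 0)
    (u : Fin n) (v : Fin p) :
    ∃ K : ℝ, 0 ≤ K ∧ ∀ X Y : Matrix (Fin n) (Fin p) ℝ,
      frobNorm (cutoffField ζ u v X - cutoffField ζ u v Y) ≤ K * frobNorm (X - Y) := by
  letI : NormedAddCommGroup (Matrix (Fin n) (Fin p) ℝ) := Matrix.normedAddCommGroup
  letI : NormedSpace ℝ (Matrix (Fin n) (Fin p) ℝ) := Matrix.normedSpace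
  obtain ⟨C, hC0, hC⟩ := lipschitz_norm ε hε ζ hζ hζ0 u v
  refine ⟨Real.sqrt (n * p) * C, by positivity, fun X Y => ?_⟩
  calc frobNorm (cutoffField ζ u v X - cutoffField ζ u v Y)
      ≤ Real.sqrt (n * p) * ‖cutoffField ζ u v X - cutoffField ζ u v Y‖ := frob_le_norm _
    _ ≤ Real.sqrt (n * p) * (C * ‖X - Y‖) := by
        exact mul_le_mul_of_nonneg_left (hC X Y) (Real.sqrt_nonneg _)
    _ ≤ Real.sqrt (n * p) * (C * frobNorm (X - Y)) := by
        exact mul_le_mul_of_nonneg_left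
          (mul_le_mul_of_nonneg_left (norm_le_frob _) hC0) (Real.sqrt_nonneg _)
    _ = Real.sqrt (n * p) * C * frobNorm (X - Y) := by ring
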